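/- Let p' > p be positive integers and r, s integers with 0 < r < p, 0 < s < p'. If for all nonnegative integers L the polynomial D_{2p',2s}(L+1+r−s, L−r+s; (2p'−1−3r+p)/2, (3r+1)/2) with parameters possibly rational but with all of αK, βK, αi, βi integral has nonnegative coefficients, then for all L the polynomial D_{4p',4s}(L+1+2r−2s, L−1−2r+2s; (10p'−5−11r+p)/4, (11r+5)/4) has nonnegative coefficients. -/

import Mathlib

open LaurentPolynomial Finset

noncomputable section

/-- The Gaussian binomial coefficient `[m choose n]_q` as a polynomial in `q`,
defined via the `q`-Pascal recurrence; it equals `(q;q)_m/((q;q)_n (q;q)_{m-n})`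
for `0 ≤ n ≤ m`. -/
def gb : ℕ → ℕ → Polynomial ℤ
  | _, 0 => 1
  | 0, _ + 1 => 0
  | m + 1, n + 1 => gb m n + Polynomial.X ^ (n + 1) * gb m (n + 1)

lemma gb_zero (m : ℕ) : gb m 0 = 1 := by cases m <;> rfl

lemma gb_succ (m n : ℕ) : gb (m+1) (n+1) = gb m n + Polynomial.X ^ (n + 1) * gb m (n + 1) := rfl

lemma gb_eq_zero_of_lt : ∀ {m n : ℕ}, m < n → gb m n = 0
  | 0, _+1, _ => rfl
  | m+1, n+1, h => by
      rw [gb_succ, gb_eq_zero_of_lt (by omega), gb_eq_zero_of_lt (by omega)]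
      simp

lemma gb_self : ∀ m : ℕ, gb m m = 1
  | 0 => rfl
  | m+1 => by rw [gb_succ, gb_self m, gb_eq_zero_of_lt (by omega)]; simp

lemma gb_coeff_nonneg : ∀ m n i : ℕ, 0 ≤ (gb m n).coeff i := by
  intro m
  induction m with
  | zero =>
    intro n i
    cases n with
    | zero =>
      rw [gb_zero]
      rcases Nat.eq_zero_or_pos i with h | h
      · simp [h]
      · simp [Polynomial.coeff_one, Nat.pos_iff_ne_zero.1 h]
    | succ n => show (0:Polynomial ℤ).coeff i ≥ 0; simp
  | succ m ih =>
    intro n i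
    cases n with
    | zero =>
      rw [gb_zero]
      rcases Nat.eq_zero_or_pos i with h | h
      · simp [h]
      · simp [Polynomial.coeff_one, Nat.pos_iff_ne_zero.1 h]
    | succ n =>
      rw [gb_succ, Polynomial.coeff_add, (Polynomial.commute_X_pow _ _).eq,
        Polynomial.coeff_mul_X_pow']
      have := ih n i
      split <;> [exact add_nonneg this (ih (n+1) _); simpa using this]

/-- `1 + q + ... + q^{k-1}`. -/
def gs (k : ℕ) : Polynomial ℤ := ∑ i ∈ range k, Polynomial.X ^ i

def gfact : ℕ → Polynomial ℤ
  | 0 => 1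
  | n + 1 => gfact n * gs (n+1)

lemma gs_ne_zero (k : ℕ) (hk : 0 < k) : gs k ≠ 0 := by
  intro h
  have := congrArg (fun p => Polynomial.coeff p 0) h
  simp only [gs, Polynomial.finset_sum_coeff, Polynomial.coeff_X_pow] at this
  rw [Finset.sum_eq_single 0 (by intro b _ hb; simp [Ne.symm hb]) (by intro h0; exact absurd (Finset.mem_range.2 hk) h0)] at this
  simp at this

lemma gfact_ne_zero : ∀ n : ℕ, gfact n ≠ 0
  | 0 => one_ne_zero
  | n+1 => mul_ne_zero (gfact_ne_zero n) (gs_ne_zero _ (by omega))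

lemma gs_split (a b : ℕ) : gs (a + b) = gs a + Polynomial.X ^ a * gs b := by
  rw [gs, Finset.sum_range_add]
  simp [gs, Finset.mul_sum, pow_add]

lemma gb_mul_gfact : ∀ m n : ℕ, n ≤ m → gb m n * (gfact n * gfact (m - n)) = gfact m := by
  intro m
  induction m with
  | zero => intro n hn; interval_cases n; simp [gb_zero, gfact]
  | succ m ih =>
    intro n hn
    cases n with
    | zero => simp [gb_zero, gfact]
    | succ n =>
      rcases eq_or_lt_of_le hn with h | h
      · cases h
        rw [gb_self]
        simp [gfact]
      · have hn' : n ≤ m := by omega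
        have hn'' : n + 1 ≤ m := by omega
        have h1 := ih n hn'
        have h2 := ih (n+1) hn''
        have e2 : m - n = (m - n - 1) + 1 := by omega
        have e3 : m - (n+1) = m - n - 1 := by omega
        rw [e3, show gfact (n+1) = gfact n * gs (n+1) from rfl] at h2
        rw [e2, show gfact ((m-n-1)+1) = gfact (m-n-1) * gs ((m-n-1)+1) from rfl, ← e2] at h1
        have e1 : m + 1 - (n + 1) = (m - n - 1) + 1 := by omega
        have e4 : gs (m + 1) = gs (n+1) + Polynomial.X ^ (n+1) * gs (m - n) := by
          have h5 : m + 1 = (n+1) + (m - n) := by omega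
          rw [h5, gs_split]
        rw [gb_succ, show gfact (n+1) = gfact n * gs (n+1) from rfl, e1,
          show gfact ((m-n-1)+1) = gfact (m-n-1) * gs ((m-n-1)+1) from rfl, ← e2,
          show gfact (m+1) = gfact m * gs (m+1) from rfl, e4]
        linear_combination gs (n+1) * h1 + Polynomial.X ^ (n+1) * gs (m-n) * h2

lemma gb_symm (m n : ℕ) (h : n ≤ m) : gb m n = gb m (m - n) := by
  have h1 := gb_mul_gfact m n h
  have h2 := gb_mul_gfact m (m - n) (by omega)
  have e : m - (m - n) = n := by omega
  rw [e] at h2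
  have := h1.trans h2.symm
  rw [mul_comm (gfact (m-n)) (gfact n)] at this
  exact mul_right_cancel₀ (mul_ne_zero (gfact_ne_zero n) (gfact_ne_zero (m-n))) this

lemma gb_trinomial (a b c : ℕ) (h1 : c ≤ b) (h2 : b ≤ a) :
    gb a b * gb b c = gb a c * gb (a - c) (b - c) := by
  have key1 : (gb a b * gb b c) * (gfact c * gfact (b - c) * gfact (a - b)) = gfact a := by
    have hb := gb_mul_gfact b c h1
    have ha := gb_mul_gfact a b h2
    calc (gb a b * gb b c) * (gfact c * gfact (b - c) * gfact (a - b))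
        = gb a b * ((gb b c * (gfact c * gfact (b - c))) * gfact (a - b)) := by ring
      _ = gb a b * (gfact b * gfact (a - b)) := by rw [hb]
      _ = gfact a := ha
  have key2 : (gb a c * gb (a - c) (b - c)) * (gfact c * gfact (b - c) * gfact (a - b)) = gfact a := by
    have hc := gb_mul_gfact a c (le_trans h1 h2)
    have hd := gb_mul_gfact (a - c) (b - c) (by omega)
    have e : a - c - (b - c) = a - b := by omega
    rw [e] at hd
    calc (gb a c * gb (a - c) (b - c)) * (gfact c * gfact (b - c) * gfact (a - b))
        = (gb (a-c) (b-c) * (gfact (b - c) * gfact (a - b))) * gb a c * gfact c := by ring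
      _ = gfact (a - c) * gb a c * gfact c := by rw [hd]
      _ = gb a c * (gfact c * gfact (a - c)) := by ring
      _ = gfact a := hc
  exact mul_right_cancel₀
    (mul_ne_zero (mul_ne_zero (gfact_ne_zero c) (gfact_ne_zero (b-c))) (gfact_ne_zero (a-b)))
    (key1.trans key2.symm)

/-- `[m choose n]_q` with integer indices, zero unless `0 ≤ n ≤ m`,
viewed as a Laurent polynomial in `q`. -/
def qbin (m n : ℤ) : LaurentPolynomial ℤ :=
  if 0 ≤ n ∧ n ≤ m then (gb m.toNat n.toNat).toLaurent else 0

lemma qbin_eq_zero {m n : ℤ} (h : n < 0 ∨ m < n) : qbin m n = 0 :=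
  if_neg (by omega)

lemma qbin_eq {m n : ℤ} (h0 : 0 ≤ n) (h1 : n ≤ m) :
    qbin m n = (gb m.toNat n.toNat).toLaurent := if_pos ⟨h0, h1⟩

lemma qbin_zero {m : ℤ} (hm : 0 ≤ m) : qbin m 0 = 1 := by
  rw [qbin_eq le_rfl hm, Int.toNat_zero, gb_zero, Polynomial.toLaurent_one]

lemma qbin_self {m : ℤ} (hm : 0 ≤ m) : qbin m m = 1 := by
  rw [qbin_eq hm le_rfl, gb_self, Polynomial.toLaurent_one]

lemma qbin_top_zero (w : ℤ) : qbin 0 w = if w = 0 then 1 else 0 := by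
  rcases eq_or_ne w 0 with h | h
  · simp [h, qbin_zero]
  · rw [if_neg h, qbin_eq_zero (by omega)]

lemma qbin_symm (m n : ℤ) (hm : 0 ≤ m) : qbin m n = qbin m (m - n) := by
  by_cases h : 0 ≤ n ∧ n ≤ m
  · rw [qbin_eq h.1 h.2, qbin_eq (by omega) (by omega)]
    have e : (m - n).toNat = m.toNat - n.toNat := by omega
    rw [e, ← gb_symm _ _ (by omega)]
  · rw [qbin_eq_zero (by omega), qbin_eq_zero (by omega)]

lemma qbin_trinomial (a b c : ℤ) (ha : 0 ≤ a) :
    qbin a b * qbin b c = qbin a c * qbin (a - c) (b - c) := by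
  by_cases h : 0 ≤ c ∧ c ≤ b ∧ b ≤ a
  · obtain ⟨h0, h1, h2⟩ := h
    rw [qbin_eq (by omega) h2, qbin_eq h0 h1, qbin_eq h0 (by omega),
      qbin_eq (by omega) (by omega), ← map_mul, ← map_mul]
    congr 1
    have e1 : (a - c).toNat = a.toNat - c.toNat := by omega
    have e2 : (b - c).toNat = b.toNat - c.toNat := by omega
    rw [e1, e2]
    exact gb_trinomial a.toNat b.toNat c.toNat (by omega) (by omega)
  · have hL : qbin a b * qbin b c = 0 := by
      rcases (by omega : c < 0 ∨ b < c ∨ a < b) with h' | h' | h'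
      · rw [qbin_eq_zero (Or.inl h'), mul_zero]
      · rw [qbin_eq_zero (Or.inr h'), mul_zero]
      · rw [qbin_eq_zero (Or.inr h'), zero_mul]
    rw [hL]
    by_cases h1 : 0 ≤ c ∧ c ≤ a
    · rw [qbin_eq_zero (show b - c < 0 ∨ a - c < b - c by omega), mul_zero]
    · rw [qbin_eq_zero (by omega), zero_mul]

lemma qbin_pascal (m n : ℤ) (hm : 0 ≤ m) :
    qbin (m + 1) n = qbin m (n - 1) + T n * qbin m n := by
  rcases lt_trichotomy n 0 with h | h | h
  · rw [qbin_eq_zero (Or.inl h), qbin_eq_zero (show n - 1 < 0 ∨ _ by omega),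
      qbin_eq_zero (Or.inl h)]
    simp
  · subst h
    rw [qbin_zero (show (0:ℤ) ≤ m + 1 by omega), qbin_zero hm,
      qbin_eq_zero (m := m) (n := (0:ℤ) - 1) (by omega)]
    simp
  · rcases (by omega : n ≤ m ∨ n = m + 1 ∨ m + 1 < n) with h1 | h1 | h1
    · rw [qbin_eq (by omega) (by omega), qbin_eq (by omega) (by omega),
        qbin_eq (by omega) h1]
      have e1 : (m + 1).toNat = m.toNat + 1 := by omega
      have e2 : n.toNat = (n - 1).toNat + 1 := by omega
      rw [e1, e2, gb_succ, map_add, map_mul, Polynomial.toLaurent_X_pow,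
        show (((n-1).toNat + 1 : ℕ) : ℤ) = n by omega]
    · subst h1
      rw [qbin_self (show (0:ℤ) ≤ m + 1 by omega), qbin_eq_zero (m := m) (n := m + 1) (by omega),
        mul_zero, add_zero, show m + 1 - 1 = m from by ring, qbin_self hm]
    · rw [qbin_eq_zero (m := m + 1) (n := n) (Or.inr h1),
        qbin_eq_zero (m := m) (n := n - 1) (by omega),
        qbin_eq_zero (m := m) (n := n) (Or.inr (by omega))]
      simp

lemma qbin_pascal' (m n : ℤ) (hm : 0 ≤ m) :
    qbin (m + 1) n = T (m + 1 - n) * qbin m (n - 1) + qbin m n := by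
  rw [qbin_symm (m + 1) n (by omega), qbin_pascal m (m + 1 - n) hm,
    show m + 1 - n - 1 = m - n from by ring, ← qbin_symm m n hm,
    show m + 1 - n = m - (n - 1) from by ring, ← qbin_symm m (n - 1) hm,
    show m - (n-1) = m + 1 - n from by ring]
  ring

/-- Two sums agree when the summand vanishes off the common part. -/
lemma sum_of_vanish {M : Type*} [AddCommMonoid M] {f : ℤ → M} {s t : Finset ℤ}
    (hs : ∀ x ∈ s, x ∉ t → f x = 0) (ht : ∀ x ∈ t, x ∉ s → f x = 0) :
    ∑ x ∈ s, f x = ∑ x ∈ t, f x := by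
  rw [← Finset.sum_subset (Finset.inter_subset_left (s₂ := t))
      (fun x hx hx' => hs x hx (fun h => hx' (Finset.mem_inter.2 ⟨hx, h⟩))),
    ← Finset.sum_subset (Finset.inter_subset_right (s₁ := s))
      (fun x hx hx' => ht x hx (fun h => hx' (Finset.mem_inter.2 ⟨h, hx⟩)))]

lemma sum_shift {M : Type*} [AddCommMonoid M] (f : ℤ → M) (lo hi t : ℤ) :
    ∑ x ∈ Finset.Icc lo hi, f x = ∑ x ∈ Finset.Icc (lo - t) (hi - t), f (x + t) := by
  apply Finset.sum_bij' (fun a _ => a - t) (fun b _ => b + t) <;>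
    simp +contextual [Finset.mem_Icc] <;> omega

lemma sum_reflect {M : Type*} [AddCommMonoid M] (f : ℤ → M) (L : ℤ) :
    ∑ x ∈ Finset.Icc (0:ℤ) L, f x = ∑ x ∈ Finset.Icc (0:ℤ) L, f (L - x) := by
  apply Finset.sum_bij' (fun a _ => L - a) (fun b _ => L - b) <;>
    simp +contextual [Finset.mem_Icc] <;> omega

lemma vandermonde (m : ℤ) (hm : 0 ≤ m) :
    ∀ n : ℤ, 0 ≤ n → ∀ c : ℤ,
      ∑ v ∈ Finset.Icc (0:ℤ) m, T ((m - v) * (c - v)) * (qbin m v * qbin n (c - v)) =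
        qbin (m + n) c := by
  refine fun n hn => Int.le_induction (motive := fun n _ => ∀ c : ℤ,
    ∑ v ∈ Finset.Icc (0:ℤ) m, T ((m - v) * (c - v)) * (qbin m v * qbin n (c - v)) =
      qbin (m + n) c) ?_ ?_ n hn
  · intro c
    have : ∀ v ∈ Finset.Icc (0:ℤ) m,
        T ((m - v) * (c - v)) * (qbin m v * qbin 0 (c - v)) =
        if v = c then T ((m - v) * (c - v)) * qbin m v else 0 := by
      intro v _
      rw [qbin_top_zero]
      rcases eq_or_ne v c with h | h
      · simp [h, sub_self]
      · rw [if_neg (by omega), if_neg h, mul_zero, mul_zero]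
    rw [Finset.sum_congr rfl this, Finset.sum_ite_eq' (Finset.Icc (0:ℤ) m) c
      (fun v => T ((m - v) * (c - v)) * qbin m v)]
    by_cases hc : c ∈ Finset.Icc (0:ℤ) m
    · rw [if_pos hc, sub_self, mul_zero, T_zero, one_mul, add_zero]
    · rw [if_neg hc, add_zero]
      rw [Finset.mem_Icc] at hc
      rw [qbin_eq_zero (by omega)]
  · intro n hn ih c
    have step : ∀ v ∈ Finset.Icc (0:ℤ) m,
        T ((m - v) * (c - v)) * (qbin m v * qbin (n + 1) (c - v)) =
        T (m + n + 1 - c) * (T ((m - v) * ((c - 1) - v)) * (qbin m v * qbin n ((c - 1) - v)))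
          + T ((m - v) * (c - v)) * (qbin m v * qbin n (c - v)) := by
      intro v _
      rw [qbin_pascal' n (c - v) hn, show c - v - 1 = (c - 1) - v from by ring]
      rw [← mul_assoc (T (m + n + 1 - c)), ← T_add]
      rw [show m + n + 1 - c + (m - v) * (c - 1 - v) = (m - v) * (c - v) + (n + 1 - (c - v))
        from by ring]
      rw [T_add]
      ring
    rw [Finset.sum_congr rfl step, Finset.sum_add_distrib, ← Finset.mul_sum, ih (c - 1), ih c,
      ← qbin_pascal' (m + n) c (by omega), show m + n + 1 = m + (n + 1) from by ring]

/-- The positivity-preserving kernel `O_{L,k}(q)`. -/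
def Opoly (L k : ℤ) : LaurentPolynomial ℤ :=
  ∑ m ∈ Finset.Icc (0:ℤ) L,
    T (k*(k+1) + (m+k)*(m+k+1)) * (qbin L m * qbin (L - m) (2*k+1))

lemma key_identity (L : ℤ) (hL : 0 ≤ L) (a : ℤ) :
    ∑ k ∈ Finset.Icc (0:ℤ) L, Opoly L k * qbin (2*k+1) (k-a)
      = T (2*(a*(a+1))) * qbin (2*L) (L-2*a-1) := by
  -- step 1 : expand and apply the two trinomial identities
  have step1 : ∀ k ∈ Finset.Icc (0:ℤ) L, Opoly L k * qbin (2*k+1) (k-a) =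
      ∑ m ∈ Finset.Icc (0:ℤ) L,
        T (k*(k+1) + (m+k)*(m+k+1)) *
          (qbin L (m+k-a) * (qbin (m+k-a) m * qbin ((L-m)-(k-a)) (k+a+1))) := by
    intro k _
    rw [Opoly, Finset.sum_mul]
    refine Finset.sum_congr rfl fun m hm => ?_
    rw [Finset.mem_Icc] at hm
    have h1 : qbin (L-m) (2*k+1) * qbin (2*k+1) (k-a)
        = qbin (L-m) (k-a) * qbin ((L-m)-(k-a)) (k+a+1) := by
      rw [qbin_trinomial (L-m) (2*k+1) (k-a) (by omega),
        show 2*k+1-(k-a) = k+a+1 from by ring]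
    have h2 : qbin L m * qbin (L-m) (k-a) = qbin L (m+k-a) * qbin (m+k-a) m := by
      have h := qbin_trinomial L (m+k-a) m hL
      rw [show m+k-a-m = k-a from by ring] at h
      exact h.symm
    calc T (k*(k+1) + (m+k)*(m+k+1)) * (qbin L m * qbin (L - m) (2*k+1)) * qbin (2*k+1) (k-a)
        = T (k*(k+1) + (m+k)*(m+k+1)) *
            (qbin L m * (qbin (L-m) (2*k+1) * qbin (2*k+1) (k-a))) := by ring
      _ = T (k*(k+1) + (m+k)*(m+k+1)) *
            ((qbin L m * qbin (L-m) (k-a)) * qbin ((L-m)-(k-a)) (k+a+1)) := by rw [h1]; ring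
      _ = _ := by rw [h2]; ring
  rw [Finset.sum_congr rfl step1, Finset.sum_comm]
  -- step 3 : for fixed m, reindex the k-sum by n = m + k - a
  have step3 : ∀ m ∈ Finset.Icc (0:ℤ) L,
      (∑ k ∈ Finset.Icc (0:ℤ) L,
        T (k*(k+1) + (m+k)*(m+k+1)) *
          (qbin L (m+k-a) * (qbin (m+k-a) m * qbin ((L-m)-(k-a)) (k+a+1)))) =
      ∑ n ∈ Finset.Icc (0:ℤ) L,
        T ((n+a-m)*(n+a-m+1) + (n+a)*(n+a+1)) *
          (qbin L n * (qbin n m * qbin (L-n) ((n+2*a+1)-m))) := by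
    intro m hm
    rw [Finset.mem_Icc] at hm
    rw [sum_of_vanish (t := Finset.Icc (a-m) (L+a-m))
      (fun k hk hk' => by
        rw [Finset.mem_Icc] at hk; rw [Finset.mem_Icc] at hk'
        rw [qbin_eq_zero (m := L) (n := m+k-a) (by omega), zero_mul, mul_zero])
      (fun k hk hk' => by
        rw [Finset.mem_Icc] at hk; rw [Finset.mem_Icc] at hk'
        rcases (show L < k ∨ k < 0 by omega) with h' | h'
        · rw [qbin_eq_zero (m := (L-m)-(k-a)) (n := k+a+1) (by omega)]
          simp
        · rcases (show k < a ∨ k + a + 1 < 0 by omega) with h'' | h''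
          · rw [qbin_eq_zero (m := m+k-a) (n := m) (by omega)]
            simp
          · rw [qbin_eq_zero (m := (L-m)-(k-a)) (n := k+a+1) (by omega)]
            simp)]
    rw [sum_shift _ (a-m) (L+a-m) (a-m), show a - m - (a-m) = 0 from by ring,
      show L + a - m - (a-m) = L from by ring]
    refine Finset.sum_congr rfl fun n _ => ?_
    rw [show n + (a-m) = n+a-m from by ring,
      show (n+a-m)*(n+a-m+1) + (m+(n+a-m))*(m+(n+a-m)+1)
        = (n+a-m)*(n+a-m+1) + (n+a)*(n+a+1) from by ring,
      show m+(n+a-m)-a = n from by ring,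
      show (L-m)-((n+a-m)-a) = L-n from by ring,
      show (n+a-m)+a+1 = (n+2*a+1)-m from by ring]
  rw [Finset.sum_congr rfl step3, Finset.sum_comm]
  -- step 5 : for fixed n, apply Vandermonde to the m-sum
  have step5 : ∀ n ∈ Finset.Icc (0:ℤ) L,
      (∑ m ∈ Finset.Icc (0:ℤ) L,
        T ((n+a-m)*(n+a-m+1) + (n+a)*(n+a+1)) *
          (qbin L n * (qbin n m * qbin (L-n) ((n+2*a+1)-m)))) =
      (T ((n+a)*(n+a+1) + a*(a+1)) * qbin L (L-n)) * qbin L (n+2*a+1) := by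
    intro n hn
    rw [Finset.mem_Icc] at hn
    rw [sum_of_vanish (t := Finset.Icc (0:ℤ) n)
      (fun m h1 h2 => by
        rw [Finset.mem_Icc] at h1; rw [Finset.mem_Icc] at h2
        rw [qbin_eq_zero (m := n) (n := m) (by omega)]
        simp)
      (fun m h1 h2 => by
        exfalso; rw [Finset.mem_Icc] at h1; rw [Finset.mem_Icc] at h2; omega)]
    have point : ∀ m ∈ Finset.Icc (0:ℤ) n,
        T ((n+a-m)*(n+a-m+1) + (n+a)*(n+a+1)) *
          (qbin L n * (qbin n m * qbin (L-n) ((n+2*a+1)-m))) =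
        (T ((n+a)*(n+a+1) + a*(a+1)) * qbin L n) *
          (T ((n - m) * ((n+2*a+1) - m)) * (qbin n m * qbin (L-n) ((n+2*a+1) - m))) := by
      intro m _
      rw [show (n+a-m)*(n+a-m+1) + (n+a)*(n+a+1)
          = ((n+a)*(n+a+1) + a*(a+1)) + (n-m)*((n+2*a+1)-m) from by ring, T_add]
      ring
    rw [Finset.sum_congr rfl point, ← Finset.mul_sum,
      vandermonde n hn.1 (L-n) (by omega) (n+2*a+1),
      show n + (L-n) = L from by ring, qbin_symm L n hL]
  rw [Finset.sum_congr rfl step5, sum_reflect]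
  have point2 : ∀ v ∈ Finset.Icc (0:ℤ) L,
      (T (((L-v)+a)*((L-v)+a+1) + a*(a+1)) * qbin L (L-(L-v))) * qbin L ((L-v)+2*a+1) =
      T (2*(a*(a+1))) *
        (T ((L - v) * ((L+2*a+1) - v)) * (qbin L v * qbin L ((L+2*a+1) - v))) := by
    intro v _
    rw [show L-(L-v) = v from by ring, show (L-v)+2*a+1 = (L+2*a+1)-v from by ring,
      show ((L-v)+a)*((L-v)+a+1) + a*(a+1)
        = 2*(a*(a+1)) + (L-v)*((L+2*a+1)-v) from by ring, T_add]
    ring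
  rw [Finset.sum_congr rfl point2, ← Finset.mul_sum,
    vandermonde L hL L hL (L+2*a+1), qbin_symm (L+L) (L+2*a+1) (by omega),
    show L + L - (L+2*a+1) = L-2*a-1 from by ring, show L + L = 2*L from by ring]

/-- A Laurent polynomial is a polynomial in `q` with nonnegative coefficients. -/
def IsNonneg (x : LaurentPolynomial ℤ) : Prop :=
  ∃ P : Polynomial ℤ, (∀ n, 0 ≤ P.coeff n) ∧ P.toLaurent = x

/-- The triangular number `T(j) = j(j+1)/2`. -/
def tri (j : ℤ) : ℤ := j * (j + 1) / 2

/-- The hook-difference generating function `D_{K,i}(N,M;α,β)` of Andrews et al.,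
parametrized by the integers `aK = αK`, `bK = βK`, `ai = αi`, `bi = βi`
(so that rational `α, β` with these products integral are allowed):
`D = ∑_{j ∈ ℤ} ( q^{j((α+β)Kj + Kβ - (α+β)i)} [M+N choose M-Kj]_q
               - q^{((α+β)j+β)(Kj+i)} [M+N choose M-Kj-i]_q )`. -/
def D (K i N M aK bK ai bi : ℤ) : LaurentPolynomial ℤ :=
  ∑ᶠ j : ℤ,
    (T (j * ((aK + bK) * j + bK - (ai + bi))) * qbin (M + N) (M - K * j) -
      T ((aK + bK) * j ^ 2 + (bK + ai + bi) * j + bi) * qbin (M + N) (M - K * j - i))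

lemma isNonneg_zero : IsNonneg 0 := ⟨0, by simp, map_zero _⟩

lemma IsNonneg.add {x y : LaurentPolynomial ℤ} (hx : IsNonneg x) (hy : IsNonneg y) :
    IsNonneg (x + y) := by
  obtain ⟨P, hP, hPe⟩ := hx
  obtain ⟨Q, hQ, hQe⟩ := hy
  exact ⟨P + Q, fun n => by simpa using add_nonneg (hP n) (hQ n),
    by rw [map_add, hPe, hQe]⟩

lemma IsNonneg.mul {x y : LaurentPolynomial ℤ} (hx : IsNonneg x) (hy : IsNonneg y) :
    IsNonneg (x * y) := by
  obtain ⟨P, hP, hPe⟩ := hx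
  obtain ⟨Q, hQ, hQe⟩ := hy
  refine ⟨P * Q, fun n => ?_, by rw [map_mul, hPe, hQe]⟩
  rw [Polynomial.coeff_mul]
  exact Finset.sum_nonneg fun x _ => mul_nonneg (hP x.1) (hQ x.2)

lemma isNonneg_sum {ι : Type*} (s : Finset ι) (f : ι → LaurentPolynomial ℤ)
    (h : ∀ i ∈ s, IsNonneg (f i)) : IsNonneg (∑ i ∈ s, f i) :=
  Finset.sum_induction f IsNonneg (fun _ _ => IsNonneg.add) isNonneg_zero h

lemma isNonneg_T {n : ℤ} (hn : 0 ≤ n) : IsNonneg (T n) :=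
  ⟨Polynomial.X ^ n.toNat, fun m => by
      rw [Polynomial.coeff_X_pow]; split <;> norm_num,
    by rw [Polynomial.toLaurent_X_pow, Int.toNat_of_nonneg hn]⟩

lemma exists_poly_qbin (m n : ℤ) : ∃ q : Polynomial ℤ, q.toLaurent = qbin m n := by
  unfold qbin
  split
  · exact ⟨_, rfl⟩
  · exact ⟨0, map_zero _⟩

lemma isNonneg_qbin (m n : ℤ) : IsNonneg (qbin m n) := by
  unfold qbin
  split
  · exact ⟨_, fun i => gb_coeff_nonneg _ _ i, rfl⟩
  · exact isNonneg_zero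

lemma int_consec (x : ℤ) : 0 ≤ x * (x + 1) := by
  rcases le_or_gt 0 x with h | h
  · exact mul_nonneg h (by omega)
  · have : 0 ≤ (-x) * (-(x+1)) := mul_nonneg (by omega) (by omega)
    nlinarith [this]

lemma isNonneg_Opoly (L k : ℤ) : IsNonneg (Opoly L k) := by
  refine isNonneg_sum _ _ fun m _ => ?_
  have he : 0 ≤ k*(k+1) + (m+k)*(m+k+1) := add_nonneg (int_consec k) (int_consec (m+k))
  exact (isNonneg_T he).mul ((isNonneg_qbin _ _).mul (isNonneg_qbin _ _))

lemma term_eq_zero (K i N M aK bK ai bi B j : ℤ) (hK : 1 ≤ K)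
    (hB : |M| + |N| + |i| + 1 ≤ B) (hj : j ∉ Finset.Icc (-B) B) :
    T (j * ((aK + bK) * j + bK - (ai + bi))) * qbin (M + N) (M - K * j) -
      T ((aK + bK) * j ^ 2 + (bK + ai + bi) * j + bi) * qbin (M + N) (M - K * j - i) = 0 := by
  rw [Finset.mem_Icc] at hj
  have hM := le_abs_self M; have hM' := neg_abs_le M
  have hN := le_abs_self N; have hN' := neg_abs_le N
  have hi2 := le_abs_self i; have hi' := neg_abs_le i
  rcases (show B < j ∨ j < -B by omega) with h | h
  · have hj0 : 0 ≤ j := by linarith [abs_nonneg M, abs_nonneg N, abs_nonneg i]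
    have hKj : j ≤ K * j := le_mul_of_one_le_left hj0 hK
    rw [qbin_eq_zero (m := M+N) (n := M - K*j) (Or.inl (by linarith)),
      qbin_eq_zero (m := M+N) (n := M - K*j - i) (Or.inl (by linarith))]
    simp
  · have hj0 : j ≤ 0 := by linarith [abs_nonneg M, abs_nonneg N, abs_nonneg i]
    have hKj : K * j ≤ j := by
      calc K * j ≤ 1 * j := mul_le_mul_of_nonpos_right hK hj0
        _ = j := one_mul j
    rw [qbin_eq_zero (m := M+N) (n := M - K*j) (Or.inr (by linarith)),
      qbin_eq_zero (m := M+N) (n := M - K*j - i) (Or.inr (by linarith))]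
    simp

lemma D_eq_sum (K i N M aK bK ai bi B : ℤ) (hK : 1 ≤ K) (hB : |M| + |N| + |i| + 1 ≤ B) :
    D K i N M aK bK ai bi =
      ∑ j ∈ Finset.Icc (-B) B,
        (T (j * ((aK + bK) * j + bK - (ai + bi))) * qbin (M + N) (M - K * j) -
          T ((aK + bK) * j ^ 2 + (bK + ai + bi) * j + bi) * qbin (M + N) (M - K * j - i)) := by
  rw [D]
  exact finsum_eq_finset_sum_of_support_subset _
    (Function.support_subset_iff'.2 fun j hj =>
      term_eq_zero K i N M aK bK ai bi B j hK hB (by simpa using hj))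

section Main

variable (P' Pz r s : ℤ)

lemma e1_nonneg (hp1 : 1 ≤ Pz) (hpq : Pz < P') (hr0 : 0 < r) (hrp : r < Pz)
    (hs0 : 0 < s) (hsp : s < P') (j : ℤ) :
    0 ≤ j * ((P'*(10*P'-5-11*r+Pz) + P'*(11*r+5)) * j + P'*(11*r+5)
        - (s*(10*P'-5-11*r+Pz) + s*(11*r+5))) := by
  have h10 : 0 < 10*P' + Pz := by linarith
  have h10b : 0 < 10*P' - 5 - 11*r + Pz := by linarith
  have hA : 0 < P'*(10*P'-5-11*r+Pz) + P'*(11*r+5) := by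
    nlinarith [mul_pos (show 0 < P' by linarith) h10]
  have hApB : 0 ≤ (P'*(10*P'-5-11*r+Pz) + P'*(11*r+5))
      + (P'*(11*r+5) - (s*(10*P'-5-11*r+Pz) + s*(11*r+5))) := by
    nlinarith [mul_nonneg (show 0 ≤ P' - s by linarith) (show 0 ≤ 10*P'+Pz by linarith),
      mul_nonneg (show 0 ≤ P' - s by linarith) (show 0 ≤ 11*r+5 by linarith),
      mul_nonneg (show 0 ≤ s by linarith) (show 0 ≤ 11*r+5 by linarith),
      mul_pos (show 0 < P' by linarith) (show 0 < 11*r+5 by linarith)]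
  have hAmB : 0 ≤ (P'*(10*P'-5-11*r+Pz) + P'*(11*r+5))
      - (P'*(11*r+5) - (s*(10*P'-5-11*r+Pz) + s*(11*r+5))) := by
    nlinarith [mul_nonneg (show 0 ≤ P' + s by linarith) h10b.le,
      mul_nonneg (show 0 ≤ s by linarith) (show 0 ≤ 11*r+5 by linarith)]
  rcases le_or_gt 0 j with hj | hj
  · nlinarith [mul_nonneg hA.le (int_consec (j-1)), mul_nonneg hApB hj]
  · nlinarith [mul_nonneg hA.le (int_consec j), mul_nonneg hAmB (show 0 ≤ -j by linarith)]

lemma e2_nonneg (hp1 : 1 ≤ Pz) (hpq : Pz < P') (hr0 : 0 < r) (hrp : r < Pz)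
    (hs0 : 0 < s) (hsp : s < P') (j : ℤ) :
    0 ≤ (P'*(10*P'-5-11*r+Pz) + P'*(11*r+5)) * j^2
        + (P'*(11*r+5) + s*(10*P'-5-11*r+Pz) + s*(11*r+5)) * j + s*(11*r+5) := by
  have h10 : 0 < 10*P' + Pz := by linarith
  have h10b : 0 < 10*P' - 5 - 11*r + Pz := by linarith
  have hA : 0 < P'*(10*P'-5-11*r+Pz) + P'*(11*r+5) := by
    nlinarith [mul_pos (show 0 < P' by linarith) h10]
  have hBI : 0 ≤ s*(11*r+5) := mul_nonneg (by linarith) (by linarith)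
  rcases le_or_gt 0 j with hj | hj
  · have hC : 0 ≤ P'*(11*r+5) + s*(10*P'-5-11*r+Pz) + s*(11*r+5) := by
      nlinarith [mul_nonneg (show 0 ≤ P' by linarith) (show 0 ≤ 11*r+5 by linarith),
        mul_nonneg (show 0 ≤ s by linarith) h10b.le, hBI]
    nlinarith [mul_nonneg hA.le (mul_self_nonneg j), mul_nonneg hC hj, hBI]
  · have h2AC : 0 ≤ 2*(P'*(10*P'-5-11*r+Pz) + P'*(11*r+5))
        - (P'*(11*r+5) + s*(10*P'-5-11*r+Pz) + s*(11*r+5)) := by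
      nlinarith [mul_nonneg (show 0 ≤ P' - s by linarith) h10.le,
        mul_nonneg (show 0 ≤ P' by linarith) h10b.le,
        mul_nonneg (show 0 ≤ P' - s by linarith) (show 0 ≤ 11*r+5 by linarith)]
    have hACB : 0 ≤ (P'*(10*P'-5-11*r+Pz) + P'*(11*r+5))
        - (P'*(11*r+5) + s*(10*P'-5-11*r+Pz) + s*(11*r+5)) + s*(11*r+5) := by
      nlinarith [mul_nonneg (show 0 ≤ P' - s by linarith) h10b.le]
    nlinarith [mul_nonneg hA.le (mul_self_nonneg (j+1)),
      mul_nonneg h2AC (show 0 ≤ -(j+1) by linarith), hACB]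

lemma main_transform (hp1 : 1 ≤ Pz) (hpq : Pz < P') (hr0 : 0 < r) (hrp : r < Pz)
    (hs0 : 0 < s) (hsp : s < P') (Li : ℤ) (hLi : 0 ≤ Li) :
    T (2*((r-s)*((r-s)+1))) *
      D (4*P') (4*s) (Li+1+2*r-2*s) (Li-1-2*r+2*s)
        (P'*(10*P'-5-11*r+Pz)) (P'*(11*r+5)) (s*(10*P'-5-11*r+Pz)) (s*(11*r+5)) =
    ∑ k ∈ Finset.Icc (0:ℤ) Li, Opoly Li k *
      D (2*P') (2*s) (k+1+r-s) (k-r+s)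
        (P'*(2*P'-1-3*r+Pz)) (P'*(3*r+1)) (s*(2*P'-1-3*r+Pz)) (s*(3*r+1)) := by
  have hK4 : (1:ℤ) ≤ 4*P' := by linarith
  have hK2 : (1:ℤ) ≤ 2*P' := by linarith
  have hBbig : |Li-1-2*r+2*s| + |Li+1+2*r-2*s| + |4*s| + 1 ≤ 2*Li + 4*r + 8*s + 3 := by
    have h1 : |Li-1-2*r+2*s| ≤ Li+1+2*r+2*s := abs_le.mpr ⟨by linarith, by linarith⟩
    have h2 : |Li+1+2*r-2*s| ≤ Li+1+2*r+2*s := abs_le.mpr ⟨by linarith, by linarith⟩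
    have h3 : |4*s| ≤ 4*s := by rw [abs_of_nonneg (by linarith)]
    linarith
  rw [D_eq_sum (4*P') (4*s) (Li+1+2*r-2*s) (Li-1-2*r+2*s) _ _ _ _
    (2*Li + 4*r + 8*s + 3) hK4 hBbig, Finset.mul_sum]
  have hsmall_eq : ∀ k ∈ Finset.Icc (0:ℤ) Li,
      D (2*P') (2*s) (k+1+r-s) (k-r+s)
        (P'*(2*P'-1-3*r+Pz)) (P'*(3*r+1)) (s*(2*P'-1-3*r+Pz)) (s*(3*r+1)) =
      ∑ j ∈ Finset.Icc (-(2*Li + 4*r + 8*s + 3)) (2*Li + 4*r + 8*s + 3),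
        (T (j * ((P'*(2*P'-1-3*r+Pz) + P'*(3*r+1)) * j + P'*(3*r+1)
            - (s*(2*P'-1-3*r+Pz) + s*(3*r+1)))) *
            qbin ((k-r+s) + (k+1+r-s)) ((k-r+s) - 2*P' * j) -
          T ((P'*(2*P'-1-3*r+Pz) + P'*(3*r+1)) * j ^ 2
            + (P'*(3*r+1) + s*(2*P'-1-3*r+Pz) + s*(3*r+1)) * j + s*(3*r+1)) *
            qbin ((k-r+s) + (k+1+r-s)) ((k-r+s) - 2*P' * j - 2*s)) := by
    intro k hk
    rw [Finset.mem_Icc] at hk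
    apply D_eq_sum _ _ _ _ _ _ _ _ _ hK2
    have h1 : |k-r+s| ≤ Li+r+s := abs_le.mpr ⟨by linarith, by linarith⟩
    have h2 : |k+1+r-s| ≤ Li+1+r+s := abs_le.mpr ⟨by linarith, by linarith⟩
    have h3 : |2*s| ≤ 2*s := by rw [abs_of_nonneg (by linarith)]
    linarith
  have hper : ∀ j ∈ Finset.Icc (-(2*Li + 4*r + 8*s + 3)) (2*Li + 4*r + 8*s + 3),
      T (2*((r-s)*((r-s)+1))) *
        (T (j * ((P'*(10*P'-5-11*r+Pz) + P'*(11*r+5)) * j + P'*(11*r+5)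
            - (s*(10*P'-5-11*r+Pz) + s*(11*r+5)))) *
            qbin ((Li-1-2*r+2*s) + (Li+1+2*r-2*s)) ((Li-1-2*r+2*s) - 4*P' * j) -
          T ((P'*(10*P'-5-11*r+Pz) + P'*(11*r+5)) * j ^ 2
            + (P'*(11*r+5) + s*(10*P'-5-11*r+Pz) + s*(11*r+5)) * j + s*(11*r+5)) *
            qbin ((Li-1-2*r+2*s) + (Li+1+2*r-2*s)) ((Li-1-2*r+2*s) - 4*P' * j - 4*s)) =
      ∑ k ∈ Finset.Icc (0:ℤ) Li, Opoly Li k *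
        (T (j * ((P'*(2*P'-1-3*r+Pz) + P'*(3*r+1)) * j + P'*(3*r+1)
            - (s*(2*P'-1-3*r+Pz) + s*(3*r+1)))) *
            qbin ((k-r+s) + (k+1+r-s)) ((k-r+s) - 2*P' * j) -
          T ((P'*(2*P'-1-3*r+Pz) + P'*(3*r+1)) * j ^ 2
            + (P'*(3*r+1) + s*(2*P'-1-3*r+Pz) + s*(3*r+1)) * j + s*(3*r+1)) *
            qbin ((k-r+s) + (k+1+r-s)) ((k-r+s) - 2*P' * j - 2*s)) := by
    intro j _
    have KI1 := key_identity Li hLi (r-s+2*P'*j)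
    have KI2 := key_identity Li hLi (r+s+2*P'*j)
    have hT1 : (T (2*((r-s)*((r-s)+1))) : LaurentPolynomial ℤ) *
        T (j * ((P'*(10*P'-5-11*r+Pz) + P'*(11*r+5)) * j + P'*(11*r+5)
          - (s*(10*P'-5-11*r+Pz) + s*(11*r+5)))) =
        T (j * ((P'*(2*P'-1-3*r+Pz) + P'*(3*r+1)) * j + P'*(3*r+1)
          - (s*(2*P'-1-3*r+Pz) + s*(3*r+1)))) *
        T (2*((r-s+2*P'*j)*(r-s+2*P'*j+1))) := by
      rw [← T_add, ← T_add]; congr 1; ring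
    have hT2 : (T (2*((r-s)*((r-s)+1))) : LaurentPolynomial ℤ) *
        T ((P'*(10*P'-5-11*r+Pz) + P'*(11*r+5)) * j ^ 2
          + (P'*(11*r+5) + s*(10*P'-5-11*r+Pz) + s*(11*r+5)) * j + s*(11*r+5)) =
        T ((P'*(2*P'-1-3*r+Pz) + P'*(3*r+1)) * j ^ 2
          + (P'*(3*r+1) + s*(2*P'-1-3*r+Pz) + s*(3*r+1)) * j + s*(3*r+1)) *
        T (2*((r+s+2*P'*j)*(r+s+2*P'*j+1))) := by
      rw [← T_add, ← T_add]; congr 1; ring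
    rw [show (Li-1-2*r+2*s) + (Li+1+2*r-2*s) = 2*Li from by ring,
      show (Li-1-2*r+2*s) - 4*P'*j - 4*s = Li - 2*(r+s+2*P'*j) - 1 from by ring,
      show (Li-1-2*r+2*s) - 4*P'*j = Li - 2*(r-s+2*P'*j) - 1 from by ring]
    have hsum : (∑ k ∈ Finset.Icc (0:ℤ) Li, Opoly Li k *
        (T (j * ((P'*(2*P'-1-3*r+Pz) + P'*(3*r+1)) * j + P'*(3*r+1)
            - (s*(2*P'-1-3*r+Pz) + s*(3*r+1)))) *
            qbin ((k-r+s) + (k+1+r-s)) ((k-r+s) - 2*P' * j) -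
          T ((P'*(2*P'-1-3*r+Pz) + P'*(3*r+1)) * j ^ 2
            + (P'*(3*r+1) + s*(2*P'-1-3*r+Pz) + s*(3*r+1)) * j + s*(3*r+1)) *
            qbin ((k-r+s) + (k+1+r-s)) ((k-r+s) - 2*P' * j - 2*s))) =
        T (j * ((P'*(2*P'-1-3*r+Pz) + P'*(3*r+1)) * j + P'*(3*r+1)
            - (s*(2*P'-1-3*r+Pz) + s*(3*r+1)))) *
          (∑ k ∈ Finset.Icc (0:ℤ) Li, Opoly Li k * qbin (2*k+1) (k - (r-s+2*P'*j))) -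
        T ((P'*(2*P'-1-3*r+Pz) + P'*(3*r+1)) * j ^ 2
            + (P'*(3*r+1) + s*(2*P'-1-3*r+Pz) + s*(3*r+1)) * j + s*(3*r+1)) *
          (∑ k ∈ Finset.Icc (0:ℤ) Li, Opoly Li k * qbin (2*k+1) (k - (r+s+2*P'*j))) := by
      rw [Finset.mul_sum, Finset.mul_sum, ← Finset.sum_sub_distrib]
      refine Finset.sum_congr rfl fun k _ => ?_
      rw [show (k-r+s) + (k+1+r-s) = 2*k+1 from by ring,
        show (k-r+s) - 2*P'*j - 2*s = k - (r+s+2*P'*j) from by ring,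
        show (k-r+s) - 2*P'*j = k - (r-s+2*P'*j) from by ring]
      ring
    rw [hsum, KI1, KI2]
    linear_combination qbin (2*Li) (Li - 2*(r-s+2*P'*j) - 1) * hT1
      - qbin (2*Li) (Li - 2*(r+s+2*P'*j) - 1) * hT2
  rw [Finset.sum_congr rfl hper, Finset.sum_comm]
  exact Finset.sum_congr rfl fun k hk => by rw [hsmall_eq k hk, Finset.mul_sum]

lemma Dbig_poly (hp1 : 1 ≤ Pz) (hpq : Pz < P') (hr0 : 0 < r) (hrp : r < Pz)
    (hs0 : 0 < s) (hsp : s < P') (Li : ℤ) (hLi : 0 ≤ Li) :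
    ∃ Q : Polynomial ℤ, Q.toLaurent =
      D (4*P') (4*s) (Li+1+2*r-2*s) (Li-1-2*r+2*s)
        (P'*(10*P'-5-11*r+Pz)) (P'*(11*r+5)) (s*(10*P'-5-11*r+Pz)) (s*(11*r+5)) := by
  have hK4 : (1:ℤ) ≤ 4*P' := by linarith
  have hBbig : |Li-1-2*r+2*s| + |Li+1+2*r-2*s| + |4*s| + 1 ≤ 2*Li + 4*r + 8*s + 3 := by
    have h1 : |Li-1-2*r+2*s| ≤ Li+1+2*r+2*s := abs_le.mpr ⟨by linarith, by linarith⟩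
    have h2 : |Li+1+2*r-2*s| ≤ Li+1+2*r+2*s := abs_le.mpr ⟨by linarith, by linarith⟩
    have h3 : |4*s| ≤ 4*s := by rw [abs_of_nonneg (by linarith)]
    linarith
  rw [D_eq_sum (4*P') (4*s) (Li+1+2*r-2*s) (Li-1-2*r+2*s) _ _ _ _
    (2*Li + 4*r + 8*s + 3) hK4 hBbig]
  refine Finset.sum_induction _ (fun x => ∃ Q : Polynomial ℤ, Q.toLaurent = x)
    (fun a b ha hb => ?_) ⟨0, map_zero _⟩ fun j _ => ?_
  · obtain ⟨qa, ha⟩ := ha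
    obtain ⟨qb, hb⟩ := hb
    exact ⟨qa + qb, by rw [map_add, ha, hb]⟩
  · have he1 := e1_nonneg P' Pz r s hp1 hpq hr0 hrp hs0 hsp j
    have he2 := e2_nonneg P' Pz r s hp1 hpq hr0 hrp hs0 hsp j
    obtain ⟨q1, hq1⟩ := exists_poly_qbin ((Li-1-2*r+2*s) + (Li+1+2*r-2*s))
      ((Li-1-2*r+2*s) - 4*P'*j)
    obtain ⟨q2, hq2⟩ := exists_poly_qbin ((Li-1-2*r+2*s) + (Li+1+2*r-2*s))
      ((Li-1-2*r+2*s) - 4*P'*j - 4*s)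
    refine ⟨Polynomial.X ^ (j * ((P'*(10*P'-5-11*r+Pz) + P'*(11*r+5)) * j + P'*(11*r+5)
        - (s*(10*P'-5-11*r+Pz) + s*(11*r+5)))).toNat * q1 -
      Polynomial.X ^ ((P'*(10*P'-5-11*r+Pz) + P'*(11*r+5)) * j ^ 2
        + (P'*(11*r+5) + s*(10*P'-5-11*r+Pz) + s*(11*r+5)) * j + s*(11*r+5)).toNat * q2, ?_⟩
    rw [map_sub, map_mul, map_mul, Polynomial.toLaurent_X_pow, Polynomial.toLaurent_X_pow,
      hq1, hq2, Int.toNat_of_nonneg he1, Int.toNat_of_nonneg he2]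

end Main

/-- If `D_{2p',2s}(L+1+r-s, L-r+s; (2p'-1-3r+p)/2, (3r+1)/2)` has nonnegative
coefficients for all `L ≥ 0`, then so does
`D_{4p',4s}(L+1+2r-2s, L-1-2r+2s; (10p'-5-11r+p)/4, (11r+5)/4)`.
Here `D` is parametrized by the integers `αK, βK, αi, βi`. -/
theorem doubling_step (p p' : ℕ) (hp : 0 < p) (hpp' : p < p')
    (r s : ℤ) (hr0 : 0 < r) (hrp : r < p) (hs0 : 0 < s) (hsp' : s < p')
    (hyp : ∀ L : ℕ, IsNonneg (D (2 * p') (2 * s) ((L : ℤ) + 1 + r - s) ((L : ℤ) - r + s)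
      ((p' : ℤ) * (2 * p' - 1 - 3 * r + p)) ((p' : ℤ) * (3 * r + 1))
      (s * (2 * p' - 1 - 3 * r + p)) (s * (3 * r + 1)))) :
    ∀ L : ℕ, IsNonneg (D (4 * p') (4 * s) ((L : ℤ) + 1 + 2 * r - 2 * s)
      ((L : ℤ) - 1 - 2 * r + 2 * s)
      ((p' : ℤ) * (10 * p' - 5 - 11 * r + p)) ((p' : ℤ) * (11 * r + 5))
      (s * (10 * p' - 5 - 11 * r + p)) (s * (11 * r + 5))) := by
  intro L
  have hp1 : (1:ℤ) ≤ (p:ℤ) := by exact_mod_cast hp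
  have hpq : (p:ℤ) < (p':ℤ) := by exact_mod_cast hpp'
  have hLi : (0:ℤ) ≤ (L:ℤ) := Int.natCast_nonneg L
  have hsmall : ∀ k ∈ Finset.Icc (0:ℤ) (L:ℤ),
      IsNonneg (D (2*(p':ℤ)) (2*s) (k+1+r-s) (k-r+s)
        ((p':ℤ)*(2*(p':ℤ)-1-3*r+(p:ℤ))) ((p':ℤ)*(3*r+1))
        (s*(2*(p':ℤ)-1-3*r+(p:ℤ))) (s*(3*r+1))) := by
    intro k hk
    rw [Finset.mem_Icc] at hk
    have h := hyp k.toNat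
    rw [Int.toNat_of_nonneg hk.1] at h
    exact h
  have main := main_transform (p':ℤ) (p:ℤ) r s hp1 hpq hr0 hrp hs0 hsp' (L:ℤ) hLi
  obtain ⟨Q, hQ⟩ := Dbig_poly (p':ℤ) (p:ℤ) r s hp1 hpq hr0 hrp hs0 hsp' (L:ℤ) hLi
  obtain ⟨Pn, hPn, hPe⟩ := isNonneg_sum (Finset.Icc (0:ℤ) (L:ℤ)) _
    (fun k hk => (isNonneg_Opoly (L:ℤ) k).mul (hsmall k hk))
  refine ⟨Q, fun n => ?_, hQ⟩
  have hc : (0:ℤ) ≤ 2*((r-s)*((r-s)+1)) := by nlinarith [int_consec (r-s)]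
  have hXQ : Polynomial.X ^ (2*((r-s)*((r-s)+1))).toNat * Q = Pn := by
    apply Polynomial.toLaurent_injective
    rw [map_mul, Polynomial.toLaurent_X_pow, Int.toNat_of_nonneg hc, hQ, main, hPe]
  have h2 := hPn (n + (2*((r-s)*((r-s)+1))).toNat)
  rw [← hXQ, Polynomial.coeff_X_pow_mul] at h2
  exact h2
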